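/- Let G be a simple graph on n = a(r+1) vertices with maximum degree Δ(G) ≤ r. Then for all 1 ≤ t ≤ n, the number of cliques of G of size t satisfies k_t(G) ≤ a · binom(r+1, t). -/

import Mathlib

open Classical Finset

namespace Paper

variable {V : Type*}

/-- The number of cliques (vertex sets inducing complete subgraphs, including
the empty set and singletons) of a graph. -/
noncomputable def cliqueCount [Fintype V] (G : SimpleGraph V) : ℕ :=
  (Finset.univ.filter fun s : Finset V => G.IsClique (s : Set V)).card

/-- The number of cliques of size `t`. -/
noncomputable def cliqueCountSize [Fintype V] (G : SimpleGraph V) (t : ℕ) : ℕ :=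
  (Finset.univ.filter fun s : Finset V => G.IsClique (s : Set V) ∧ s.card = t).card

/-- A finset of vertices is independent if its vertices are pairwise nonadjacent. -/
def IsIndepFinset (G : SimpleGraph V) (s : Finset V) : Prop :=
  (s : Set V).Pairwise fun u v => ¬ G.Adj u v

/-- The number of independent sets (including the empty set) of a graph. -/
noncomputable def indepCount [Fintype V] (G : SimpleGraph V) : ℕ :=
  (Finset.univ.filter fun s : Finset V => IsIndepFinset G s).card

/-- The number of independent sets of size `t`. -/
noncomputable def indepCountSize [Fintype V] (G : SimpleGraph V) (t : ℕ) : ℕ :=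
  (Finset.univ.filter fun s : Finset V => IsIndepFinset G s ∧ s.card = t).card

/-- `S_T`: the set of common neighbors of all vertices of `T`. -/
noncomputable def commonNbrs [Fintype V] (G : SimpleGraph V) (T : Finset V) : Finset V :=
  Finset.univ.filter fun v => ∀ x ∈ T, G.Adj x v

/-- The weight `w(C)` of a clique: the number of common neighbors of its vertices. -/
noncomputable def weight [Fintype V] (G : SimpleGraph V) (T : Finset V) : ℕ :=
  (commonNbrs G T).card

/-- A clique `T` is tight (for max degree bound `r`) if `w(T) = r + 1 - |T|`. -/
def IsTight [Fintype V] (r : ℕ) (G : SimpleGraph V) (T : Finset V) : Prop :=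
  G.IsClique (T : Set V) ∧ weight G T + T.card = r + 1

/-- A cluster is a maximal tight clique. -/
def IsCluster [Fintype V] (r : ℕ) (G : SimpleGraph V) (T : Finset V) : Prop :=
  IsTight r G T ∧ ∀ T' : Finset V, T ⊆ T' → IsTight r G T' → T' = T

/-- The graph `G_T`, obtained from `G` by adding all edges within `S_T` and deleting all
edges between `S_T` and `V(G) \ (T ∪ S_T)`. -/
noncomputable def modGraph [Fintype V] (G : SimpleGraph V) (T : Finset V) : SimpleGraph V :=
  SimpleGraph.fromRel fun u v =>
    (u ∈ commonNbrs G T ∧ v ∈ commonNbrs G T) ∨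
    (G.Adj u v ∧ ¬(u ∈ commonNbrs G T ∧ v ∉ T ∪ commonNbrs G T) ∧
      ¬(v ∈ commonNbrs G T ∧ u ∉ T ∪ commonNbrs G T))

/-- The graph `R_T`: the complement of the subgraph of `G` induced on `S_T`. -/
noncomputable def RT [Fintype V] (G : SimpleGraph V) (T : Finset V) :
    SimpleGraph ((commonNbrs G T : Finset V) : Set V) :=
  (SimpleGraph.induce ((commonNbrs G T : Finset V) : Set V) G)ᶜ

/-- `δ_I`: the minimum degree in `R` over the vertices of `I`. -/
noncomputable def minDegOn {W : Type*} [Fintype W] (R : SimpleGraph W) (I : Finset W) : ℕ :=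
  sInf ((fun x => R.degree x) '' (I : Set W))

/-- The fixed loss `φ(R) = Σ_{∅ ≠ I independent} (2 ^ δ_I - 1)`. -/
noncomputable def fixedLoss {W : Type*} [Fintype W] (R : SimpleGraph W) : ℕ :=
  ∑ I ∈ Finset.univ.filter (fun I : Finset W => I.Nonempty ∧ IsIndepFinset R I),
    (2 ^ minDegOn R I - 1)

/-- The disjoint union of `a` copies of `K_{r+1}` together with one copy of `K_b`. -/
noncomputable def kUnion (a r b : ℕ) : SimpleGraph ((Fin a × Fin (r + 1)) ⊕ Fin b) :=
  SimpleGraph.fromRel fun x y =>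
    match x, y with
    | Sum.inl (i, _), Sum.inl (j, _) => i = j
    | Sum.inr _, Sum.inr _ => True
    | _, _ => False

/-- The disjoint union of `a` copies of `K_3` together with one copy of the cycle `C_m`. -/
noncomputable def triCyc (a m : ℕ) : SimpleGraph ((Fin a × Fin 3) ⊕ Fin m) :=
  SimpleGraph.fromRel fun x y =>
    match x, y with
    | Sum.inl (i, _), Sum.inl (j, _) => i = j
    | Sum.inr u, Sum.inr v => (u.val + 1) % m = v.val
    | _, _ => False

end Paper

open Paper

/-- **Theorem 2.5 (refined form).** If `G` is a graph on `n = a(r+1)` vertices with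
`Δ(G) ≤ r`, then for all `1 ≤ t ≤ n`, `k_t(G) ≤ a * binom(r+1, t)`. -/
theorem stmt8 {V : Type*} [Fintype V] (n r a t : ℕ) (hn : n = a * (r + 1))
    (hcard : Fintype.card V = n) (G : SimpleGraph V) (hdeg : G.maxDegree ≤ r)
    (ht1 : 1 ≤ t) (ht2 : t ≤ n) :
    cliqueCountSize G t ≤ a * Nat.choose (r + 1) t := by
  classical
  set S := Finset.univ.filter fun s : Finset V => G.IsClique (s : Set V) ∧ s.card = t with hS
  have key : ∀ v : V, (S.filter fun s => v ∈ s).card ≤ Nat.choose r (t - 1) := by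
    intro v
    have h1 : (S.filter fun s => v ∈ s).card ≤
        ((G.neighborFinset v).powersetCard (t - 1)).card := by
      apply Finset.card_le_card_of_injOn (fun s => s.erase v)
      · intro s hs
        replace hs : s ∈ S.filter (fun s => v ∈ s) := hs
        show s.erase v ∈ (G.neighborFinset v).powersetCard (t - 1)
        simp only [hS, Finset.mem_filter, Finset.mem_univ, true_and] at hs
        obtain ⟨⟨hc, hcardt⟩, hv⟩ := hs
        rw [Finset.mem_powersetCard]
        refine ⟨fun u hu => ?_, by rw [Finset.card_erase_of_mem hv, hcardt]⟩
        rw [Finset.mem_erase] at hu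
        rw [SimpleGraph.mem_neighborFinset]
        exact (hc (by simp [hu.2]) (by simp [hv]) hu.1).symm
      · intro s hs s' hs' h
        simp only [Finset.coe_filter, Set.mem_setOf_eq] at hs hs'
        have := congrArg (insert v) h
        rwa [Finset.insert_erase hs.2, Finset.insert_erase hs'.2] at this
    have h2 : ((G.neighborFinset v).powersetCard (t - 1)).card
        = (G.degree v).choose (t - 1) := by
      rw [Finset.card_powersetCard, SimpleGraph.card_neighborFinset_eq_degree]
    have h3 : G.degree v ≤ r := le_trans (G.degree_le_maxDegree v) hdeg
    calc (S.filter fun s => v ∈ s).card ≤ (G.degree v).choose (t - 1) := h2 ▸ h1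
      _ ≤ r.choose (t - 1) := Nat.choose_le_choose _ h3
  have hsum : S.card * t = ∑ v : V, (S.filter fun s => v ∈ s).card := by
    have : ∀ v : V, (S.filter fun s => v ∈ s).card = ∑ s ∈ S, if v ∈ s then 1 else 0 :=
      fun v => Finset.card_filter _ _
    simp_rw [this]
    rw [Finset.sum_comm]
    have : ∀ s ∈ S, (∑ v : V, if v ∈ s then 1 else 0) = t := by
      intro s hs
      simp only [hS, Finset.mem_filter, Finset.mem_univ, true_and] at hs
      rw [← Finset.card_filter]
      simpa using hs.2
    rw [Finset.sum_congr rfl this, Finset.sum_const, smul_eq_mul]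
  have hbound : S.card * t ≤ a * Nat.choose (r + 1) t * t := by
    rw [hsum]
    calc ∑ v : V, (S.filter fun s => v ∈ s).card
        ≤ ∑ _v : V, r.choose (t - 1) := Finset.sum_le_sum fun v _ => key v
      _ = Fintype.card V * r.choose (t - 1) := by
          rw [Finset.sum_const, Finset.card_univ, smul_eq_mul]
      _ = a * ((r + 1) * r.choose (t - 1)) := by rw [hcard, hn]; ring
      _ = a * ((r + 1).choose t * t) := by
          have h : t - 1 + 1 = t := Nat.succ_pred_eq_of_pos ht1
          rw [show (r + 1) * r.choose (t - 1) = Nat.succ r * r.choose (t - 1) from rfl,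
            Nat.succ_eq_add_one, Nat.add_one_mul_choose_eq]
          simp [Nat.succ_eq_add_one, h]
      _ = a * (r + 1).choose t * t := by ring
  have : cliqueCountSize G t = S.card := rfl
  rw [this]
  exact Nat.le_of_mul_le_mul_right hbound ht1
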